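/- Let h be a dimension function such that h ≺ x^α for every α > 0, i.e. lim_{x→0⁺} x^α/h(x) = 0 for every α > 0. Then there exists a set G ⊆ ℝ² such that H^h(G) = 0 and, for every direction e on the unit circle, G contains two distinct points x, y with x − y parallel to e. -/

import Mathlib

open MeasureTheory Set Filter
open scoped ENNReal NNReal

/-- Generalized Hausdorff measure on the plane associated with a dimension function. -/
noncomputable def genH (h : ℝ → ℝ) : Measure (EuclideanSpace ℝ (Fin 2)) :=
  Measure.mkMetric fun d => ENNReal.ofReal (h d.toReal)

/-- A dimension function: nondecreasing, continuous on `[0,∞)`, `h 0 = 0`, nonnegative. -/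
def IsDimFun (h : ℝ → ℝ) : Prop :=
  MonotoneOn h (Ici 0) ∧ ContinuousOn h (Ici 0) ∧ h 0 = 0 ∧ ∀ x ≥ (0:ℝ), 0 ≤ h x

/-- Doubling condition for a dimension function. -/
def IsDoubling (h : ℝ → ℝ) : Prop := ∃ C > (0:ℝ), ∀ x ≥ (0:ℝ), h (2 * x) ≤ C * h x

set_option linter.unusedVariables false

namespace S19

attribute [local instance] Classical.propDecidable

open Real

noncomputable abbrev E2 := EuclideanSpace ℝ (Fin 2)

noncomputable def fval (d : ℕ → Fin 4) : ℝ := ∑' i, (d i : ℝ) / 4 ^ (i + 1)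

lemma term_nonneg (d : ℕ → Fin 4) (i : ℕ) : 0 ≤ (d i : ℝ) / 4 ^ (i+1) := by positivity

lemma term_le (d : ℕ → Fin 4) (i : ℕ) : (d i : ℝ) / 4 ^ (i+1) ≤ 3 / 4 ^ (i+1) := by
  gcongr
  have := (d i).isLt
  exact_mod_cast Nat.lt_succ_iff.mp this

lemma summable_c : Summable (fun i : ℕ => (3:ℝ) / 4 ^ (i+1)) := by
  have : (fun i : ℕ => (3:ℝ) / 4 ^ (i+1)) = fun i => (3/4) * (1/4)^i := by
    funext i; rw [pow_succ]; field_simp; rw [← mul_pow]; norm_num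
  rw [this]
  exact (summable_geometric_of_lt_one (by norm_num) (by norm_num)).mul_left _

lemma tsum_c : ∑' i : ℕ, (3:ℝ) / 4 ^ (i+1) = 1 := by
  have : (fun i : ℕ => (3:ℝ) / 4 ^ (i+1)) = fun i => (3/4) * (1/4)^i := by
    funext i; rw [pow_succ]; field_simp; rw [← mul_pow]; norm_num
  rw [this, tsum_mul_left, tsum_geometric_of_lt_one (by norm_num) (by norm_num)]
  norm_num

lemma summable_term (d : ℕ → Fin 4) : Summable (fun i => (d i : ℝ) / 4 ^ (i+1)) :=
  Summable.of_nonneg_of_le (term_nonneg d) (term_le d) summable_c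

lemma tsum_c_shift (n : ℕ) : ∑' i : ℕ, (3:ℝ) / 4 ^ ((i+n)+1) = (1/4)^n := by
  have : (fun i : ℕ => (3:ℝ) / 4 ^ ((i+n)+1)) = fun i => (1/4)^n * (3 / 4^(i+1)) := by
    funext i
    rw [show (i+n)+1 = n + (i+1) by ring, pow_add, one_div, inv_pow, ← one_div,
      div_mul_div_comm, one_mul]
  rw [this, tsum_mul_left, tsum_c, mul_one]

lemma tail_le (d : ℕ → Fin 4) (n : ℕ) :
    ∑' i : ℕ, (d (i+n) : ℝ) / 4 ^ ((i+n)+1) ≤ (1/4)^n := by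
  rw [← tsum_c_shift n]
  exact Summable.tsum_le_tsum (fun i => term_le d (i+n))
    ((summable_nat_add_iff (f := fun i => (d i : ℝ) / 4 ^ (i+1)) n).mpr (summable_term d))
    ((summable_nat_add_iff (f := fun i : ℕ => (3:ℝ) / 4 ^ (i+1)) n).mpr summable_c)

lemma tail_nonneg (d : ℕ → Fin 4) (n : ℕ) :
    0 ≤ ∑' i : ℕ, (d (i+n) : ℝ) / 4 ^ ((i+n)+1) :=
  tsum_nonneg (fun i => term_nonneg d (i+n))

lemma fval_nonneg (d : ℕ → Fin 4) : 0 ≤ fval d := tsum_nonneg (term_nonneg d)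

lemma fval_zero : fval (fun _ => 0) = 0 := by simp [fval]

lemma fval_lt_one (d : ℕ → Fin 4) (j : ℕ) (hj : d j ≠ 3) : fval d < 1 := by
  rw [← tsum_c]
  refine Summable.tsum_lt_tsum_of_nonneg (i := j) (term_nonneg d) (term_le d) ?_ summable_c
  have h4 := (d j).isLt
  have hne : ((d j : ℕ) : ℝ) < 3 := by
    have h3 : (d j : ℕ) ≠ 3 := by
      intro H; apply hj; exact Fin.ext (by simpa using H)
    have : (d j : ℕ) < 3 := by omega
    exact_mod_cast this
  have hp : (0:ℝ) < 4 ^ (j+1) := by positivity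
  exact (div_lt_div_iff_of_pos_right hp).mpr hne

lemma fval_pos (d : ℕ → Fin 4) (j : ℕ) (hj : d j ≠ 0) : 0 < fval d := by
  have h1 : (0:ℝ) < (d j : ℝ) / 4 ^ (j+1) := by
    apply div_pos _ (by positivity)
    have : (d j : ℕ) ≠ 0 := fun H => hj (Fin.ext (by simpa using H))
    have : 0 < (d j : ℕ) := Nat.pos_of_ne_zero this
    exact_mod_cast this
  exact h1.trans_le (Summable.le_tsum (summable_term d) j (fun i _ => term_nonneg d i))

lemma fval_agree_le (d d' : ℕ → Fin 4) (n : ℕ) (hag : ∀ i < n, d i = d' i) :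
    |fval d - fval d'| ≤ (1/4)^n := by
  have hd := summable_term d
  have hd' := summable_term d'
  have e1 := Summable.sum_add_tsum_nat_add (f := fun i => (d i : ℝ) / 4 ^ (i+1)) n hd
  have e2 := Summable.sum_add_tsum_nat_add (f := fun i => (d' i : ℝ) / 4 ^ (i+1)) n hd'
  have hsum : ∑ i ∈ Finset.range n, (d i : ℝ) / 4 ^ (i+1)
      = ∑ i ∈ Finset.range n, (d' i : ℝ) / 4 ^ (i+1) := by
    apply Finset.sum_congr rfl
    intro i hi
    rw [hag i (Finset.mem_range.mp hi)]
  have t1 := tail_le d n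
  have t2 := tail_le d' n
  have t1' := tail_nonneg d n
  have t2' := tail_nonneg d' n
  rw [fval, fval, ← e1, ← e2]
  rw [abs_le]
  constructor <;> [nlinarith; nlinarith]

lemma exists_expansion {s : ℝ} (h0 : 0 ≤ s) (h1 : s < 1) : ∃ d : ℕ → Fin 4, fval d = s := by
  set dig : ℕ → ℤ := fun i => ⌊s * 4^(i+1)⌋ - 4 * ⌊s * 4^i⌋ with hdig
  have hnn : ∀ i, 0 ≤ dig i := by
    intro i
    have h2 : ((4 * ⌊s * 4^i⌋ : ℤ) : ℝ) ≤ s * 4^(i+1) := by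
      push_cast
      have h3 := Int.floor_le (s * 4^i)
      have h4 : (4:ℝ)^(i+1) = 4^i * 4 := pow_succ 4 i
      nlinarith [h3, h4]
    have := Int.le_floor.mpr h2
    simp only [hdig]
    omega
  have hlt : ∀ i, dig i < 4 := by
    intro i
    have h2 : s * 4^(i+1) < ((4 * ⌊s * 4^i⌋ + 4 : ℤ) : ℝ) := by
      push_cast
      have h3 := Int.lt_floor_add_one (s * 4^i)
      have h4 : (4:ℝ)^(i+1) = 4^i * 4 := pow_succ 4 i
      nlinarith [h3, h4]
    have := Int.floor_lt.mpr h2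
    simp only [hdig]
    omega
  refine ⟨fun i => ⟨(dig i).toNat, by have := hnn i; have := hlt i; omega⟩, ?_⟩
  set d : ℕ → Fin 4 := fun i => ⟨(dig i).toNat, by have := hnn i; have := hlt i; omega⟩ with hd
  have hcast : ∀ i, ((d i : ℕ) : ℝ) = ((dig i : ℤ) : ℝ) := by
    intro i
    have : ((d i : ℕ) : ℤ) = dig i := by
      simp only [hd]
      exact Int.toNat_of_nonneg (hnn i)
    exact_mod_cast congrArg (fun z : ℤ => (z : ℝ)) this
  have hpart : ∀ n, ∑ i ∈ Finset.range n, (d i : ℝ) / 4 ^ (i+1) = (⌊s * 4^n⌋ : ℝ) / 4^n := by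
    intro n
    induction n with
    | zero =>
      have : ⌊s⌋ = 0 := Int.floor_eq_zero_iff.mpr ⟨h0, h1⟩
      simp [this]
    | succ n ih =>
      rw [Finset.sum_range_succ, ih, hcast n]
      simp only [hdig]
      push_cast
      have p1 : (0:ℝ) < 4 ^ n := by positivity
      have p2 : (0:ℝ) < 4 ^ (n+1) := by positivity
      field_simp
      ring
  have hlim : Filter.Tendsto (fun n => (⌊s * 4^n⌋ : ℝ) / 4^n) atTop (nhds s) := by
    have hb : ∀ n : ℕ, ‖(⌊s * 4^n⌋ : ℝ) / 4^n - s‖ ≤ (1/4)^n := by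
      intro n
      have p1 : (0:ℝ) < 4 ^ n := by positivity
      have f1 := Int.floor_le (s * 4^n)
      have f2 := Int.lt_floor_add_one (s * 4^n)
      have e : (⌊s * 4^n⌋ : ℝ)/4^n - s = ((⌊s * 4^n⌋ : ℝ) - s * 4^n)/4^n := by
        field_simp
      rw [Real.norm_eq_abs, e, abs_div, abs_of_pos p1, show (1/4:ℝ)^n = 1/4^n by
        rw [div_pow, one_pow]]
      have hnum : |(⌊s * 4^n⌋ : ℝ) - s * 4^n| ≤ 1 := abs_le.mpr ⟨by linarith, by linarith⟩
      gcongr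
    have h2 : Filter.Tendsto (fun n : ℕ => (⌊s * 4^n⌋ : ℝ) / 4^n - s) atTop (nhds 0) :=
      squeeze_zero_norm hb (tendsto_pow_atTop_nhds_zero_of_lt_one (by norm_num) (by norm_num))
    simpa using h2.add_const s
  have hts := (summable_term d).hasSum.tendsto_sum_nat
  rw [show (fun n => ∑ i ∈ Finset.range n, (d i : ℝ) / 4^(i+1)) = fun n => (⌊s * 4^n⌋:ℝ)/4^n
    from funext hpart] at hts
  exact tendsto_nhds_unique hts hlim

lemma geom_Ico (a b : ℕ) (hab : a ≤ b) :
    ∑ i ∈ Finset.Ico a b, (3:ℝ)/4^(i+1) = (1/4)^a - (1/4)^b := by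
  induction b, hab using Nat.le_induction with
  | base => simp
  | succ b hab ih =>
    have hq : ∀ m : ℕ, (1/4:ℝ)^m = 1/4^m := fun m => by rw [div_pow, one_pow]
    rw [Finset.sum_Ico_succ_top hab, ih, hq b, hq (b+1), hq a]
    have p : (0:ℝ) < 4^b := by positivity
    field_simp
    ring

lemma fval_strict (d d' : ℕ → Fin 4) (i0 j : ℕ) (hij : i0 < j)
    (hag : ∀ i < i0, d i = d' i) (hlt : (d i0 : ℕ) < (d' i0 : ℕ))
    (hj : (d j : ℕ) ≤ 2 ∨ 1 ≤ (d' j : ℕ)) : fval d < fval d' := by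
  have hd := summable_term d
  have hd' := summable_term d'
  set c : ℕ → ℝ := fun i => (d' i : ℝ)/4^(i+1) - (d i : ℝ)/4^(i+1) with hc
  have hcs : Summable c := hd'.sub hd
  have key : fval d' - fval d = ∑ i ∈ Finset.range (j+1), c i + ∑' i, c (i + (j+1)) := by
    rw [Summable.sum_add_tsum_nat_add (j+1) hcs, fval, fval, ← Summable.tsum_sub hd' hd]
  -- tail bound
  have htail : -((1/4:ℝ)^(j+1)) ≤ ∑' i, c (i + (j+1)) := by
    have := Summable.tsum_le_tsum (f := fun i : ℕ => -((3:ℝ)/4^((i+(j+1))+1))) (g := fun i => c (i+(j+1)))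
      (fun i => by
        have := term_le d (i+(j+1))
        have := term_nonneg d' (i+(j+1))
        simp only [hc]
        nlinarith)
      (((summable_nat_add_iff (f := fun i : ℕ => (3:ℝ)/4^(i+1)) (j+1)).mpr summable_c).neg)
      ((summable_nat_add_iff (f := fun i => c i) (j+1)).mpr hcs)
    calc -((1/4:ℝ)^(j+1)) = ∑' i : ℕ, -((3:ℝ)/4^((i+(j+1))+1)) := by
          rw [tsum_neg, tsum_c_shift]
      _ ≤ _ := this
  -- finite part
  have hsplit : ∑ i ∈ Finset.range (j+1), c i
      = ∑ i ∈ Finset.range i0, c i + ∑ i ∈ Finset.Ico i0 j, c i + c j := by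
    rw [Finset.sum_range_succ, Finset.range_eq_Ico,
      ← Finset.sum_Ico_consecutive _ (Nat.zero_le i0) (le_of_lt hij), ← Finset.range_eq_Ico]
  have h0 : ∑ i ∈ Finset.range i0, c i = 0 := by
    apply Finset.sum_eq_zero
    intro i hi
    simp only [hc, hag i (Finset.mem_range.mp hi), sub_self]
  have hIco : ∑ i ∈ Finset.Ico i0 j, c i = c i0 + ∑ i ∈ Finset.Ico (i0+1) j, c i :=
    Finset.sum_eq_sum_Ico_succ_bot hij _
  have hci0 : (1:ℝ)/4^(i0+1) ≤ c i0 := by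
    have : ((d i0 : ℕ) : ℝ) + 1 ≤ ((d' i0 : ℕ) : ℝ) := by exact_mod_cast hlt
    simp only [hc]
    have hp : (0:ℝ) < 4^(i0+1) := by positivity
    rw [div_sub_div_same, le_div_iff₀ hp, one_div, inv_mul_cancel₀ hp.ne']
    linarith
  have hmid : -((1/4:ℝ)^(i0+1) - (1/4)^j) ≤ ∑ i ∈ Finset.Ico (i0+1) j, c i := by
    rw [← geom_Ico (i0+1) j hij]
    rw [← Finset.sum_neg_distrib]
    apply Finset.sum_le_sum
    intro i _
    have := term_le d i
    have := term_nonneg d' i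
    simp only [hc]
    nlinarith
  have hcj : -((2:ℝ)/4^(j+1)) ≤ c j := by
    have hp : (0:ℝ) < 4^(j+1) := by positivity
    rcases hj with hj | hj
    · have h2 : ((d j : ℕ) : ℝ) ≤ 2 := by exact_mod_cast hj
      have := term_nonneg d' j
      simp only [hc]
      rw [div_sub_div_same, ← neg_div, div_le_div_iff_of_pos_right hp]
      linarith
    · have h2 : (1:ℝ) ≤ ((d' j : ℕ) : ℝ) := by exact_mod_cast hj
      have h3 : ((d j : ℕ) : ℝ) ≤ 3 := by
        have := (d j).isLt
        have : (d j : ℕ) ≤ 3 := by omega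
        exact_mod_cast this
      simp only [hc]
      rw [div_sub_div_same, ← neg_div, div_le_div_iff_of_pos_right hp]
      linarith
  clear_value c
  have hgeom1 : (1:ℝ)/4^(i0+1) = (1/4)^(i0+1) := by rw [div_pow, one_pow]
  have hgeom2 : (2:ℝ)/4^(j+1) = 2 * (1/4)^(j+1) := by
    rw [div_pow, one_pow]; ring
  have hgeom3 : (1/4:ℝ)^j = 4 * (1/4)^(j+1) := by
    rw [pow_succ]; ring
  have hfin : 0 < fval d' - fval d := by
    rw [key, hsplit, h0, hIco]
    have hppos : (0:ℝ) < (1/4)^(j+1) := by positivity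
    nlinarith [hci0, hmid, hcj, htail, hgeom1, hgeom2, hgeom3, hppos]
  linarith

lemma eq_zero_of_disj (P : ℕ → Prop) (d d' : ℕ → Fin 4)
    (hd : ∀ i, ¬ P i → d i = 0) (hd' : ∀ i, P i → d' i = 0)
    (hPinf : ∀ M, ∃ j, M < j ∧ P j) (hPcinf : ∀ M, ∃ j, M < j ∧ ¬ P j)
    (heq : fval d = fval d') : ∀ i, d i = 0 ∧ d' i = 0 := by
  have hdd' : d = d' := by
    by_contra hne
    have hex : ∃ i, d i ≠ d' i := Function.ne_iff.mp hne
    set i0 := Nat.find hex with hi0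
    have h0 : d i0 ≠ d' i0 := Nat.find_spec hex
    have hag : ∀ i < i0, d i = d' i := fun i hi => not_not.mp (Nat.find_min hex hi)
    have hvne : (d i0 : ℕ) ≠ (d' i0 : ℕ) := fun H => h0 (Fin.ext H)
    rcases lt_or_gt_of_ne hvne with hc | hc
    · obtain ⟨j, hj1, hj2⟩ := hPcinf i0
      have : fval d < fval d' := by
        apply fval_strict d d' i0 j hj1 hag hc
        left; rw [hd j hj2]; simp
      linarith [this, heq.le]
    · obtain ⟨j, hj1, hj2⟩ := hPinf i0
      have : fval d' < fval d := by
        apply fval_strict d' d i0 j hj1 (fun i hi => (hag i hi).symm) hc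
        left; rw [hd' j hj2]; simp
      linarith [this, heq.le]
  intro i
  by_cases hP : P i
  · have := hd' i hP
    exact ⟨by rw [hdd', this], this⟩
  · have := hd i hP
    exact ⟨this, by rw [← hdd', this]⟩

/-! ### circle map -/

noncomputable def gmap (t : ℝ) : E2 :=
  (WithLp.equiv 2 (Fin 2 → ℝ)).symm ![Real.cos (2*π*t), Real.sin (2*π*t)]

lemma gmap_zero (t : ℝ) : gmap t 0 = Real.cos (2*π*t) := rfl

lemma gmap_one (t : ℝ) : gmap t 1 = Real.sin (2*π*t) := rfl

lemma abs_cos_sub_cos_le (a b : ℝ) : |Real.cos a - Real.cos b| ≤ |a - b| := by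
  rw [Real.cos_sub_cos, abs_mul, abs_mul]
  have h1 : |Real.sin ((a+b)/2)| ≤ 1 :=
    abs_le.mpr ⟨Real.neg_one_le_sin _, Real.sin_le_one _⟩
  have h2 : |Real.sin ((a-b)/2)| ≤ |a-b|/2 := by
    have := Real.abs_sin_le_abs (x := (a-b)/2)
    rwa [abs_div, abs_two] at this
  have e2 : |(-2:ℝ)| = 2 := by norm_num
  rw [e2]
  nlinarith [abs_nonneg (Real.sin ((a-b)/2)), abs_nonneg (Real.sin ((a+b)/2)),
    abs_nonneg (a-b)]

lemma abs_sin_sub_sin_le (a b : ℝ) : |Real.sin a - Real.sin b| ≤ |a - b| := by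
  rw [Real.sin_sub_sin, abs_mul, abs_mul]
  have h1 : |Real.cos ((a+b)/2)| ≤ 1 :=
    abs_le.mpr ⟨Real.neg_one_le_cos _, Real.cos_le_one _⟩
  have h2 : |Real.sin ((a-b)/2)| ≤ |a-b|/2 := by
    have := Real.abs_sin_le_abs (x := (a-b)/2)
    rwa [abs_div, abs_two] at this
  have e2 : |(2:ℝ)| = 2 := by norm_num
  rw [e2]
  nlinarith [abs_nonneg (Real.sin ((a-b)/2)), abs_nonneg (Real.cos ((a+b)/2)),
    abs_nonneg (a-b)]

lemma dist_gmap_le (t s : ℝ) : dist (gmap t) (gmap s) ≤ 9 * |t - s| := by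
  rw [EuclideanSpace.dist_eq, Fin.sum_univ_two]
  have h0 : dist (gmap t 0) (gmap s 0) ≤ 2*π*|t-s| := by
    rw [gmap_zero, gmap_zero, Real.dist_eq]
    calc |Real.cos (2*π*t) - Real.cos (2*π*s)| ≤ |2*π*t - 2*π*s| := abs_cos_sub_cos_le _ _
      _ = 2*π*|t-s| := by
          rw [show 2*π*t - 2*π*s = (2*π)*(t-s) by ring, abs_mul,
            abs_of_pos (by positivity : (0:ℝ) < 2*π)]
  have h1 : dist (gmap t 1) (gmap s 1) ≤ 2*π*|t-s| := by
    rw [gmap_one, gmap_one, Real.dist_eq]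
    calc |Real.sin (2*π*t) - Real.sin (2*π*s)| ≤ |2*π*t - 2*π*s| := abs_sin_sub_sin_le _ _
      _ = 2*π*|t-s| := by
          rw [show 2*π*t - 2*π*s = (2*π)*(t-s) by ring, abs_mul,
            abs_of_pos (by positivity : (0:ℝ) < 2*π)]
  have key : dist (gmap t 0) (gmap s 0) ^ 2 + dist (gmap t 1) (gmap s 1) ^ 2
      ≤ (9*|t-s|)^2 := by
    have hπ : π < 3.15 := Real.pi_lt_d2
    have hπ0 : 0 < π := Real.pi_pos
    have h0' := pow_le_pow_left₀ dist_nonneg h0 2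
    have h1' := pow_le_pow_left₀ dist_nonneg h1 2
    have hπ2 : π^2 ≤ 9.9225 := by nlinarith
    have hfin := mul_le_mul_of_nonneg_right hπ2 (sq_nonneg (|t-s|))
    nlinarith [h0', h1', hfin, sq_nonneg (|t-s|)]
  calc Real.sqrt (dist (gmap t 0) (gmap s 0) ^ 2 + dist (gmap t 1) (gmap s 1) ^ 2)
      ≤ Real.sqrt ((9*|t-s|)^2) := Real.sqrt_le_sqrt key
    _ = 9*|t-s| := Real.sqrt_sq (by positivity)

/-! ### the pieces and their covers -/

def DSet (P : ℕ → Prop) : Set (ℕ → Fin 4) := {d | ∀ i, ¬ P i → d i = 0}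

noncomputable def pieceSet (P : ℕ → Prop) : Set E2 := gmap '' (fval '' DSet P)

lemma cover_piece (P : ℕ → Prop) (m n : ℕ) (hgap : ∀ i, m ≤ i → i < n → ¬ P i) :
    ∃ F : (Fin m → Fin 4) → Set E2, (pieceSet P ⊆ ⋃ q, F q) ∧
      ∀ q, EMetric.diam (F q) ≤ ENNReal.ofReal (9 * (1/4)^n) := by
  refine ⟨fun q => gmap '' (fval '' {d | d ∈ DSet P ∧ ∀ i : Fin m, d i = q i}), ?_, ?_⟩
  · rintro x hx
    obtain ⟨y, ⟨d, hd, rfl⟩, rfl⟩ := hx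
    exact mem_iUnion.mpr ⟨fun i => d i, ⟨fval d, ⟨d, ⟨hd, fun i => rfl⟩, rfl⟩, rfl⟩⟩
  · intro q
    apply EMetric.diam_le
    rintro x ⟨_, ⟨d, ⟨hd, hq⟩, rfl⟩, rfl⟩ y ⟨_, ⟨d', ⟨hd', hq'⟩, rfl⟩, rfl⟩
    rw [edist_dist]
    apply ENNReal.ofReal_le_ofReal
    have hagn : ∀ i < n, d i = d' i := by
      intro i hi
      by_cases him : i < m
      · rw [hq ⟨i, him⟩, hq' ⟨i, him⟩]
      · rw [hd i (hgap i (le_of_not_gt him) hi), hd' i (hgap i (le_of_not_gt him) hi)]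
    have habs := fval_agree_le d d' n hagn
    calc dist (gmap (fval d)) (gmap (fval d')) ≤ 9 * |fval d - fval d'| := dist_gmap_le _ _
      _ ≤ 9 * (1/4)^n := by linarith

/-! ### choice of scales -/

section

variable (h : ℝ → ℝ)

lemma h_small (hh : IsDimFun h) : Filter.Tendsto (fun n : ℕ => h (9*(1/4)^n)) atTop (nhds 0) := by
  obtain ⟨hmono, hcont, h00, hpos⟩ := hh
  have hc : Filter.Tendsto h (nhdsWithin 0 (Ici 0)) (nhds 0) := by
    have := hcont 0 (mem_Ici.mpr le_rfl)
    rw [ContinuousWithinAt, h00] at this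
    exact this
  apply hc.comp
  rw [tendsto_nhdsWithin_iff]
  constructor
  · have := (tendsto_pow_atTop_nhds_zero_of_lt_one
      (by norm_num : (0:ℝ) ≤ 1/4) (by norm_num)).const_mul (9:ℝ)
    simpa using this
  · exact Filter.Eventually.of_forall (fun n => mem_Ici.mpr (by positivity))

lemma exists_step (hh : IsDimFun h) (k M : ℕ) : ∃ n, M < n ∧ h (9*(1/4)^n) ≤ (1/2)^k * (1/4)^M := by
  have hT := h_small h hh
  have hpos : (0:ℝ) < (1/2)^k * (1/4)^M := by positivity
  have h1 : ∀ᶠ n in atTop, h (9*(1/4)^n) < (1/2)^k*(1/4)^M := hT.eventually_lt_const hpos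
  obtain ⟨n, hn1, hn2⟩ := (h1.and (eventually_gt_atTop M)).exists
  exact ⟨n, hn2, hn1.le⟩

variable (hh : IsDimFun h)

noncomputable def Nf : ℕ → ℕ
  | 0 => 0
  | (k+1) => Classical.choose (exists_step h hh k (Nf k))

lemma Nf_spec (k : ℕ) : Nf h hh k < Nf h hh (k+1) ∧
    h (9*(1/4)^(Nf h hh (k+1))) ≤ (1/2)^k * (1/4)^(Nf h hh k) := by
  have := Classical.choose_spec (exists_step h hh k (Nf h hh k))
  exact this

lemma Nf_strict : StrictMono (Nf h hh) :=
  strictMono_nat_of_lt_succ (fun k => (Nf_spec h hh k).1)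

lemma Nf_ge (k : ℕ) : k ≤ Nf h hh k := (Nf_strict h hh).le_apply

def AP (i : ℕ) : Prop := ∃ k, Nf h hh (2*k) ≤ i ∧ i < Nf h hh (2*k+1)

lemma AP_not (k i : ℕ) (h1 : Nf h hh (2*k+1) ≤ i) (h2 : i < Nf h hh (2*k+2)) :
    ¬ AP h hh i := by
  rintro ⟨k', hk1, hk2⟩
  rcases le_or_gt k' k with hle | hlt
  · have : Nf h hh (2*k'+1) ≤ Nf h hh (2*k+1) := (Nf_strict h hh).monotone (by omega)
    omega
  · have : Nf h hh (2*k+2) ≤ Nf h hh (2*k') := (Nf_strict h hh).monotone (by omega)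
    omega

lemma AP_inf (M : ℕ) : ∃ j, M < j ∧ AP h hh j := by
  refine ⟨Nf h hh (2*(M+1)), ?_, M+1, le_rfl, Nf_strict h hh (by omega)⟩
  calc M < 2*(M+1) := by omega
    _ ≤ Nf h hh (2*(M+1)) := Nf_ge h hh _

lemma APc_inf (M : ℕ) : ∃ j, M < j ∧ ¬ AP h hh j := by
  refine ⟨Nf h hh (2*(M+1)+1), ?_, AP_not h hh (M+1) _ le_rfl (Nf_strict h hh (by omega))⟩
  calc M < 2*(M+1)+1 := by omega
    _ ≤ Nf h hh (2*(M+1)+1) := Nf_ge h hh _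

/-! ### null pieces -/

lemma null_piece (hh : IsDimFun h) (P : ℕ → Prop)
    (hb : ∀ k, ∃ m n : ℕ, k ≤ n ∧ (∀ i, m ≤ i → i < n → ¬ P i) ∧
      (4:ℝ)^m * h (9*(1/4)^n) ≤ (1/2)^k) : genH h (pieceSet P) = 0 := by
  obtain ⟨hmono, hcont, h00, hpos⟩ := hh
  choose mf nf hkn hgap hbound using hb
  choose F hcov hdiam using fun k => cover_piece P (mf k) (nf k) (hgap k)
  have hr : Filter.Tendsto (fun k => ENNReal.ofReal (9 * (1/4:ℝ)^(nf k))) atTop (nhds 0) := by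
    rw [← ENNReal.ofReal_zero]
    apply ENNReal.tendsto_ofReal
    apply squeeze_zero (fun k => by positivity) (g := fun k => 9 * (1/4:ℝ)^k)
    · intro k
      have : ((1:ℝ)/4)^(nf k) ≤ (1/4)^k :=
        pow_le_pow_of_le_one (by norm_num) (by norm_num) (hkn k)
      linarith
    · have := (tendsto_pow_atTop_nhds_zero_of_lt_one
        (by norm_num : (0:ℝ) ≤ 1/4) (by norm_num)).const_mul (9:ℝ)
      simpa using this
  have hle := Measure.mkMetric_le_liminf_tsum (s := pieceSet P) (l := atTop)
      (fun k => ENNReal.ofReal (9 * (1/4:ℝ)^(nf k))) hr F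
      (Filter.Eventually.of_forall hdiam) (Filter.Eventually.of_forall hcov)
      (fun d => ENNReal.ofReal (h d.toReal))
  have hsum : ∀ k, (∑' q : (Fin (mf k) → Fin 4),
      ENNReal.ofReal (h (EMetric.diam (F k q)).toReal)) ≤ ENNReal.ofReal ((1/2:ℝ)^k) := by
    intro k
    rw [tsum_fintype]
    have hterm : ∀ q, ENNReal.ofReal (h (EMetric.diam (F k q)).toReal)
        ≤ ENNReal.ofReal (h (9*(1/4:ℝ)^(nf k))) := by
      intro q
      apply ENNReal.ofReal_le_ofReal
      apply hmono (mem_Ici.mpr ENNReal.toReal_nonneg) (mem_Ici.mpr (by positivity))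
      exact ENNReal.toReal_le_of_le_ofReal (by positivity) (hdiam k q)
    calc ∑ q : (Fin (mf k) → Fin 4), ENNReal.ofReal (h (EMetric.diam (F k q)).toReal)
        ≤ ∑ _q : (Fin (mf k) → Fin 4), ENNReal.ofReal (h (9*(1/4:ℝ)^(nf k))) :=
          Finset.sum_le_sum (fun q _ => hterm q)
      _ = (Fintype.card (Fin (mf k) → Fin 4)) •
            ENNReal.ofReal (h (9*(1/4:ℝ)^(nf k))) := by
          rw [Finset.sum_const, Finset.card_univ]
      _ = ((4^(mf k) : ℕ) : ℝ≥0∞) * ENNReal.ofReal (h (9*(1/4:ℝ)^(nf k))) := by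
          rw [nsmul_eq_mul, Fintype.card_fun, Fintype.card_fin, Fintype.card_fin]
      _ = ENNReal.ofReal ((4:ℝ)^(mf k) * h (9*(1/4:ℝ)^(nf k))) := by
          rw [ENNReal.ofReal_mul (by positivity : (0:ℝ) ≤ (4:ℝ)^(mf k))]
          congr 1
          rw [← ENNReal.ofReal_natCast]
          congr 1
          push_cast
          ring
      _ ≤ ENNReal.ofReal ((1/2:ℝ)^k) := ENNReal.ofReal_le_ofReal (hbound k)
  have hliminf : Filter.liminf (fun k => ∑' q : (Fin (mf k) → Fin 4),
      ENNReal.ofReal (h (EMetric.diam (F k q)).toReal)) atTop = 0 := by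
    have h2 : Filter.Tendsto (fun k => ENNReal.ofReal ((1/2:ℝ)^k)) atTop (nhds 0) := by
      rw [← ENNReal.ofReal_zero]
      exact ENNReal.tendsto_ofReal
        (tendsto_pow_atTop_nhds_zero_of_lt_one (by norm_num) (by norm_num))
    refine le_antisymm ?_ (zero_le)
    calc Filter.liminf _ atTop ≤ Filter.liminf (fun k => ENNReal.ofReal ((1/2:ℝ)^k)) atTop :=
          Filter.liminf_le_liminf (Filter.Eventually.of_forall hsum)
      _ = 0 := h2.liminf_eq
  refine le_antisymm ?_ (zero_le)
  calc genH h (pieceSet P)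
      = Measure.mkMetric (fun d => ENNReal.ofReal (h d.toReal)) (pieceSet P) := rfl
    _ ≤ _ := hle
    _ = 0 := hliminf

end

/-! ### producing pairs with prescribed angle sums -/

lemma sum_mask (P : ℕ → Prop) (d : ℕ → Fin 4) :
    fval (fun i => if P i then d i else 0) + fval (fun i => if P i then 0 else d i)
      = fval d := by
  rw [fval, fval, fval, ← Summable.tsum_add (summable_term _) (summable_term _)]
  congr 1
  funext i
  by_cases hP : P i <;> simp [hP]

lemma exists_pair (P : ℕ → Prop)
    (hPinf : ∀ M, ∃ j, M < j ∧ P j) (hPcinf : ∀ M, ∃ j, M < j ∧ ¬ P j)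
    {s : ℝ} (hs0 : 0 < s) (hs1 : s ≤ 1) :
    ∃ θ φ, θ ∈ fval '' DSet P ∧ φ ∈ fval '' DSet (fun i => ¬ P i) ∧ θ + φ = s ∧ θ ≠ φ ∧
      0 ≤ θ ∧ θ < 1 ∧ 0 ≤ φ ∧ φ < 1 := by
  have hmem : ∀ d : ℕ → Fin 4, (fun i => if P i then d i else 0) ∈ DSet P := by
    intro d i hi
    simp [DSet, hi]
  have hmem' : ∀ d : ℕ → Fin 4, (fun i => if P i then 0 else d i)
      ∈ DSet (fun i => ¬ P i) := by
    intro d i hi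
    have : P i := not_not.mp hi
    simp [DSet, this]
  have hdisj : ∀ d d' : ℕ → Fin 4,
      fval (fun i => if P i then d i else 0) = fval (fun i => if P i then 0 else d' i) →
      ∀ i, (if P i then d i else 0) = (0 : Fin 4) ∧ (if P i then 0 else d' i) = (0 : Fin 4) := by
    intro d d' heq
    apply eq_zero_of_disj P _ _ ?_ ?_ hPinf hPcinf heq
    · intro i hi; simp [hi]
    · intro i hi; simp [hi]
  rcases eq_or_lt_of_le hs1 with hs1 | hs1
  · -- s = 1
    set dA : ℕ → Fin 4 := fun i => if P i then (3:Fin 4) else 0 with hdA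
    set dB : ℕ → Fin 4 := fun i => if P i then 0 else (3:Fin 4) with hdB
    have hsum : fval dA + fval dB = s := by
      rw [hdA, hdB, sum_mask P (fun _ => 3), hs1]
      rw [fval, show (fun i => ((((fun _ => 3) : ℕ → Fin 4) i : ℕ) : ℝ) / 4 ^ (i+1))
        = fun i : ℕ => (3:ℝ)/4^(i+1) from funext (fun i => by rw [show ((3:Fin 4):ℕ) = 3 from rfl]; norm_num), tsum_c]
    have hne : fval dA ≠ fval dB := by
      intro heq
      obtain ⟨j, _, hjP⟩ := hPinf 0
      have := (hdisj (fun _ => 3) (fun _ => 3) heq j).1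
      rw [if_pos hjP] at this
      exact absurd this (by decide)
    obtain ⟨jA, _, hjA⟩ := hPcinf 0
    obtain ⟨jB, _, hjB⟩ := hPinf 0
    refine ⟨fval dA, fval dB, mem_image_of_mem _ (hmem _), mem_image_of_mem _ (hmem' _),
      hsum, hne, fval_nonneg _, ?_, fval_nonneg _, ?_⟩
    · exact fval_lt_one dA jA (by simp [hdA, hjA])
    · exact fval_lt_one dB jB (by simp [hdB, hjB])
  · -- s < 1
    obtain ⟨d, hd⟩ := exists_expansion hs0.le hs1
    set dA : ℕ → Fin 4 := fun i => if P i then d i else 0 with hdA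
    set dB : ℕ → Fin 4 := fun i => if P i then 0 else d i with hdB
    have hsum : fval dA + fval dB = s := by rw [hdA, hdB, sum_mask P d, hd]
    have hne : fval dA ≠ fval dB := by
      intro heq
      have hz := hdisj d d heq
      have hdz : d = fun _ => 0 := by
        funext i
        rcases hz i with ⟨hz1, hz2⟩
        by_cases hP : P i
        · rwa [if_pos hP] at hz1
        · rwa [if_neg hP] at hz2
      rw [hdz, fval_zero] at hd
      linarith
    have hA0 := fval_nonneg dA
    have hB0 := fval_nonneg dB
    refine ⟨fval dA, fval dB, mem_image_of_mem _ (hmem _), mem_image_of_mem _ (hmem' _),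
      hsum, hne, hA0, by linarith, hB0, by linarith⟩

end S19

open S19 Real

theorem stmt19 (h : ℝ → ℝ) (hh : IsDimFun h)
    (hzero : ∀ α : ℝ, 0 < α →
      Tendsto (fun x => x ^ α / h x) (nhdsWithin 0 (Ioi 0)) (nhds 0)) :
    ∃ G : Set (EuclideanSpace ℝ (Fin 2)), genH h G = 0 ∧
      ∀ e : EuclideanSpace ℝ (Fin 2), ‖e‖ = 1 →
        ∃ x ∈ G, ∃ y ∈ G, x ≠ y ∧ ∃ t : ℝ, x - y = t • e := by
  classical
  set P : ℕ → Prop := AP h hh with hP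
  refine ⟨pieceSet P ∪ pieceSet (fun i => ¬ P i), ?_, ?_⟩
  · apply measure_union_null
    · apply null_piece h hh P
      intro k
      refine ⟨Nf h hh (2*k+1), Nf h hh (2*k+2), ?_, ?_, ?_⟩
      · calc k ≤ 2*k+2 := by omega
          _ ≤ Nf h hh (2*k+2) := Nf_ge h hh _
      · intro i h1 h2
        exact AP_not h hh k i h1 h2
      · have hspec := (Nf_spec h hh (2*k+1)).2
        rw [show 2*k+2 = (2*k+1)+1 by ring]
        set m := Nf h hh (2*k+1) with hm
        have h4 : (0:ℝ) ≤ 4 ^ m := by positivity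
        calc (4:ℝ)^m * h (9*(1/4)^(Nf h hh ((2*k+1)+1)))
            ≤ (4:ℝ)^m * ((1/2)^(2*k+1) * (1/4)^m) := mul_le_mul_of_nonneg_left hspec h4
          _ = ((1:ℝ)/2)^(2*k+1) * ((4 * (1/4):ℝ))^m := by rw [mul_pow]; ring
          _ = (1/2)^(2*k+1) := by norm_num
          _ ≤ (1/2)^k := pow_le_pow_of_le_one (by norm_num) (by norm_num) (by omega)
    · apply null_piece h hh
      intro k
      refine ⟨Nf h hh (2*k), Nf h hh (2*k+1), ?_, ?_, ?_⟩
      · calc k ≤ 2*k+1 := by omega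
          _ ≤ Nf h hh (2*k+1) := Nf_ge h hh _
      · intro i h1 h2 hni
        exact hni ⟨k, h1, h2⟩
      · have hspec := (Nf_spec h hh (2*k)).2
        set m := Nf h hh (2*k) with hm
        have h4 : (0:ℝ) ≤ 4 ^ m := by positivity
        calc (4:ℝ)^m * h (9*(1/4)^(Nf h hh (2*k+1)))
            ≤ (4:ℝ)^m * ((1/2)^(2*k) * (1/4)^m) := mul_le_mul_of_nonneg_left hspec h4
          _ = ((1:ℝ)/2)^(2*k) * ((4 * (1/4):ℝ))^m := by rw [mul_pow]; ring
          _ = (1/2)^(2*k) := by norm_num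
          _ ≤ (1/2)^k := pow_le_pow_of_le_one (by norm_num) (by norm_num) (by omega)
  · intro e he
    have hsq : e 0 ^ 2 + e 1 ^ 2 = 1 := by
      have hn : ‖e‖ = Real.sqrt (‖e 0‖^2 + ‖e 1‖^2) := by
        rw [EuclideanSpace.norm_eq, Fin.sum_univ_two]
      have h1 : Real.sqrt (‖e 0‖^2 + ‖e 1‖^2) = 1 := by rw [← hn, he]
      have h2 := congrArg (fun x : ℝ => x^2) h1
      simp only [one_pow] at h2
      rw [Real.sq_sqrt (by positivity)] at h2
      simpa [Real.norm_eq_abs, sq_abs] using h2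
    set z : ℂ := ⟨e 0, e 1⟩ with hz
    have habs : ‖z‖ = 1 := by
      rw [Complex.norm_def, Complex.normSq_mk,
        show e 0 * e 0 + e 1 * e 1 = 1 by nlinarith [hsq]]
      exact Real.sqrt_one
    have hz0 : z ≠ 0 := by
      intro H
      rw [H] at habs
      simp at habs
    set ψ := Complex.arg z with hψ
    have hcos : Real.cos ψ = e 0 := by
      rw [hψ, Complex.cos_arg hz0, habs]
      simp [hz]
    have hsin : Real.sin ψ = e 1 := by
      rw [hψ, Complex.sin_arg, habs]
      simp [hz]
    set r : ℝ := ψ/π + 1/2 with hr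
    obtain ⟨s, m', hsm, hs0, hs1⟩ :
        ∃ (s : ℝ) (m' : ℤ), s = r - m' ∧ 0 < s ∧ s ≤ 1 := by
      by_cases hfr : Int.fract r = 0
      · refine ⟨1, ⌊r⌋ - 1, ?_, one_pos, le_rfl⟩
        have h4 : r - ⌊r⌋ = 0 := by rw [Int.self_sub_floor, hfr]
        push_cast
        linarith
      · refine ⟨Int.fract r, ⌊r⌋, (Int.self_sub_floor r).symm, ?_, (Int.fract_lt_one r).le⟩
        exact (Int.fract_nonneg r).lt_of_ne (Ne.symm hfr)
    obtain ⟨θ, φ, hθ, hφ, hsum, hne, hθ0, hθ1, hφ0, hφ1⟩ :=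
      exists_pair P (AP_inf h hh) (APc_inf h hh) hs0 hs1
    set t : ℝ := -2 * Real.cos ((m':ℝ) * π) * Real.sin (π * (θ - φ)) with ht
    have hπ0 := Real.pi_ne_zero
    have hπs : π * s = ψ + π/2 - (m':ℝ) * π := by
      rw [hsm, hr]
      field_simp
    have hsin_pis : Real.sin (π * s) = Real.cos ψ * Real.cos ((m':ℝ) * π) := by
      rw [hπs, show ψ + π/2 - (m':ℝ)*π = (ψ + π/2) - (m':ℝ)*π by ring, Real.sin_sub,
        Real.sin_add_pi_div_two, Real.cos_add_pi_div_two, Real.sin_int_mul_pi]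
      ring
    have hcos_pis : Real.cos (π * s) = -(Real.sin ψ * Real.cos ((m':ℝ) * π)) := by
      rw [hπs, show ψ + π/2 - (m':ℝ)*π = (ψ + π/2) - (m':ℝ)*π by ring, Real.cos_sub,
        Real.sin_add_pi_div_two, Real.cos_add_pi_div_two, Real.sin_int_mul_pi]
      ring
    have ee1 : (2*π*θ + 2*π*φ)/2 = π * s := by rw [← hsum]; ring
    have ee2 : (2*π*θ - 2*π*φ)/2 = π * (θ - φ) := by ring
    have hkey : gmap θ - gmap φ = t • e := by
      refine PiLp.ext fun i => ?_
      rw [PiLp.sub_apply, PiLp.smul_apply, smul_eq_mul]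
      match i with
      | 0 =>
        rw [gmap_zero, gmap_zero, Real.cos_sub_cos, ee1, ee2, hsin_pis, ← hcos, ht]
        ring
      | 1 =>
        rw [gmap_one, gmap_one, Real.sin_sub_sin, ee2, ee1, hcos_pis, ← hsin, ht]
        ring
    have hcosm : Real.cos ((m':ℝ) * π) ≠ 0 := by
      have h2 := Real.sin_sq_add_cos_sq ((m':ℝ) * π)
      rw [Real.sin_int_mul_pi] at h2
      intro H
      rw [H] at h2
      norm_num at h2
    have hsinne : Real.sin (π * (θ - φ)) ≠ 0 := by
      have hppos := Real.pi_pos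
      have hb1 : -π < π * (θ - φ) := by
        nlinarith [mul_pos hppos (show (0:ℝ) < θ - φ + 1 by linarith)]
      have hb2 : π * (θ - φ) < π := by
        nlinarith [mul_pos hppos (show (0:ℝ) < 1 - (θ - φ) by linarith)]
      intro H
      rw [Real.sin_eq_zero_iff_of_lt_of_lt hb1 hb2] at H
      rcases mul_eq_zero.mp H with H | H
      · exact hπ0 H
      · exact hne (by linarith [sub_eq_zero.mp H])
    have htne : t ≠ 0 := by
      rw [ht]
      exact mul_ne_zero (mul_ne_zero (by norm_num) hcosm) hsinne
    have hxy : gmap θ ≠ gmap φ := by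
      intro H
      have h0 : t • e = 0 := by rw [← hkey, H, sub_self]
      rcases smul_eq_zero.mp h0 with hcase | hcase
      · exact htne hcase
      · rw [hcase] at he
        simp at he
    exact ⟨gmap θ, Set.mem_union_left _ (mem_image_of_mem _ hθ),
      gmap φ, Set.mem_union_right _ (mem_image_of_mem _ hφ), hxy, t, hkey⟩
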